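/- Let F be a finite field and C ⊆ Fⁿ a Euclidean LCD code (C ∩ C^⊥ = {0}) of dimension k with generator matrix G. Then the n × n matrix Gᵀ(G·Gᵀ)^{-1}G is well-defined (G·Gᵀ is invertible) and is the matrix of the orthogonal projection of Fⁿ onto C: it is idempotent, its image is C, and its kernel is C^⊥. -/

import Mathlib

open Matrix

/-- For a Euclidean LCD code `C ⊆ Fⁿ` with generator matrix `G`, the matrix `G·Gᵀ` is
invertible and `Gᵀ(G·Gᵀ)⁻¹G` is the matrix of the orthogonal projection of `Fⁿ` onto
`C`: it is idempotent, its image is `C`, and its kernel is `C^⊥`. -/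
theorem stmt17 {F : Type*} [Field F] [Fintype F] (n k : ℕ)
    (G : Matrix (Fin k) (Fin n) F)
    (C : Submodule F (Fin n → F))
    (hC : C = Submodule.span F (Set.range fun i => G i))
    (hGind : LinearIndependent F fun i => G i)
    (hLCD : (C : Set (Fin n → F)) ∩ {x | ∀ c ∈ C, ∑ j, x j * c j = 0} = {0}) :
    IsUnit (G * Gᵀ) ∧
      (Gᵀ * (G * Gᵀ)⁻¹ * G) * (Gᵀ * (G * Gᵀ)⁻¹ * G) = Gᵀ * (G * Gᵀ)⁻¹ * G ∧
      LinearMap.range (Gᵀ * (G * Gᵀ)⁻¹ * G).vecMulLinear = C ∧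
      (LinearMap.ker (Gᵀ * (G * Gᵀ)⁻¹ * G).vecMulLinear : Set (Fin n → F)) =
        {x | ∀ c ∈ C, ∑ j, x j * c j = 0} := by
  have hrowmem : ∀ i, G i ∈ C := by
    intro i
    rw [hC]
    exact Submodule.subset_span ⟨i, rfl⟩
  -- characterization of the dual condition
  have hdual : ∀ x : Fin n → F, (∀ c ∈ C, ∑ j, x j * c j = 0) ↔ x ᵥ* Gᵀ = 0 := by
    intro x
    constructor
    · intro h
      funext i
      have := h (G i) (hrowmem i)
      simpa [vecMul, dotProduct, transpose_apply] using this
    · intro h c hc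
      rw [hC] at hc
      induction hc using Submodule.span_induction with
      | mem c hcmem =>
        obtain ⟨i, rfl⟩ := hcmem
        have := congr_fun h i
        simpa [vecMul, dotProduct, transpose_apply] using this
      | zero => simp
      | add a b _ _ ha hb =>
        simp only [Pi.add_apply, mul_add, Finset.sum_add_distrib, ha, hb, add_zero]
      | smul r a _ ha =>
        have h1 : ∀ j, x j * (r • a) j = r * (x j * a j) := fun j => by
          simp [mul_comm, mul_left_comm]
        simp only [h1, ← Finset.mul_sum, ha, mul_zero]
  have hGinj : Function.Injective G.vecMul := Matrix.vecMul_injective_iff.mpr hGind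
  have hGinj0 : ∀ z : Fin k → F, z ᵥ* G = 0 → z = 0 := by
    intro z hz
    apply hGinj
    show z ᵥ* G = 0 ᵥ* G
    rw [hz, Matrix.zero_vecMul]
  -- G * Gᵀ is a unit
  have hUnit : IsUnit (G * Gᵀ) := by
    rw [← Matrix.vecMul_injective_iff_isUnit]
    intro v w hvw
    have hsub : (v - w) ᵥ* (G * Gᵀ) = 0 := by
      rw [Matrix.sub_vecMul]
      show v ᵥ* (G * Gᵀ) - w ᵥ* (G * Gᵀ) = 0
      rw [show v ᵥ* (G * Gᵀ) = w ᵥ* (G * Gᵀ) from hvw, sub_self]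
    set x := (v - w) ᵥ* G with hx
    have hxC : x ∈ C := by
      rw [hC, show (fun i => G i) = Matrix.row G from rfl, ← range_vecMulLinear]
      exact ⟨v - w, rfl⟩
    have hxd : x ᵥ* Gᵀ = 0 := by
      rw [hx, Matrix.vecMul_vecMul]
      exact hsub
    have hx0 : x = 0 := by
      have hmem : x ∈ (C : Set (Fin n → F)) ∩ {y | ∀ c ∈ C, ∑ j, y j * c j = 0} :=
        ⟨hxC, (hdual x).mpr hxd⟩
      rw [hLCD] at hmem
      exact hmem
    have := hGinj0 (v - w) (by rw [← hx, hx0])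
    exact sub_eq_zero.mp this
  have hdet : IsUnit (G * Gᵀ).det := (Matrix.isUnit_iff_isUnit_det _).mp hUnit
  have hinv1 : (G * Gᵀ)⁻¹ * (G * Gᵀ) = 1 := Matrix.nonsing_inv_mul _ hdet
  have hGP : G * (Gᵀ * (G * Gᵀ)⁻¹ * G) = G := by
    rw [← Matrix.mul_assoc G (Gᵀ * (G * Gᵀ)⁻¹) G, ← Matrix.mul_assoc G Gᵀ (G * Gᵀ)⁻¹,
      Matrix.mul_nonsing_inv _ hdet, Matrix.one_mul]
  have hidem : (Gᵀ * (G * Gᵀ)⁻¹ * G) * (Gᵀ * (G * Gᵀ)⁻¹ * G) = Gᵀ * (G * Gᵀ)⁻¹ * G := by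
    rw [Matrix.mul_assoc (Gᵀ * (G * Gᵀ)⁻¹) G, hGP]
  -- fixed points
  have hfix : ∀ c ∈ C, c ᵥ* (Gᵀ * (G * Gᵀ)⁻¹ * G) = c := by
    intro c hc
    rw [hC, show (fun i => G i) = Matrix.row G from rfl, ← range_vecMulLinear] at hc
    obtain ⟨y, rfl⟩ := hc
    show (y ᵥ* G) ᵥ* _ = y ᵥ* G
    rw [Matrix.vecMul_vecMul, hGP]
  refine ⟨hUnit, hidem, ?_, ?_⟩
  · apply le_antisymm
    · rintro _ ⟨x, rfl⟩
      show x ᵥ* (Gᵀ * (G * Gᵀ)⁻¹ * G) ∈ C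
      rw [hC, show (fun i => G i) = Matrix.row G from rfl, ← range_vecMulLinear, ← Matrix.vecMul_vecMul]
      exact ⟨x ᵥ* (Gᵀ * (G * Gᵀ)⁻¹), rfl⟩
    · intro c hc
      exact ⟨c, hfix c hc⟩
  · ext x
    simp only [SetLike.mem_coe, LinearMap.mem_ker, Matrix.vecMulLinear_apply, Set.mem_setOf_eq]
    rw [hdual x]
    constructor
    · intro h
      have hz : (x ᵥ* (Gᵀ * (G * Gᵀ)⁻¹)) ᵥ* G = 0 := by
        rw [Matrix.vecMul_vecMul]
        exact h
      have hz0 := hGinj0 _ hz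
      have hxy : x ᵥ* Gᵀ = (x ᵥ* (Gᵀ * (G * Gᵀ)⁻¹)) ᵥ* (G * Gᵀ) := by
        rw [Matrix.vecMul_vecMul, Matrix.mul_assoc, hinv1, Matrix.mul_one]
      rw [hxy, hz0, Matrix.zero_vecMul]
    · intro h
      have hxy : x ᵥ* (Gᵀ * (G * Gᵀ)⁻¹ * G) = (x ᵥ* Gᵀ) ᵥ* ((G * Gᵀ)⁻¹ * G) := by
        rw [Matrix.vecMul_vecMul, Matrix.mul_assoc]
      rw [hxy, h, Matrix.zero_vecMul]
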